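/- Let U = exp(-i θ P / 2) where P is a Hermitian unitary matrix (P² = I, P† = P). Then for any fixed unitaries V, W and unit vector ψ and Hermitian matrix O, the function L(θ) = ⟨ψ| W† U(θ)† V† O V U(θ) W |ψ⟩ satisfies the parameter-shift rule: dL/dθ = (1/2)(L(θ + π/2) − L(θ − π/2)). -/

import Mathlib

open Matrix Complex

lemma exp_herm_unitary {n : ℕ} (P : Matrix (Fin n) (Fin n) ℂ) (hP : P * P = 1) (t : ℝ) :
    NormedSpace.exp ((-(t : ℂ) * Complex.I) • P)
      = (Real.cos t : ℂ) • (1 : Matrix (Fin n) (Fin n) ℂ)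
        + ((Real.sin t : ℂ) * -Complex.I) • P := by
  have hP2 : P ^ 2 = 1 := by rw [sq, hP]
  have hsq : ((-(t : ℂ) * Complex.I) • P) ^ 2 = (-(t:ℂ)^2) • 1 := by
    rw [smul_pow, hP2]
    congr 1
    rw [mul_pow, Complex.I_sq]
    ring
  rw [NormedSpace.exp_eq_tsum (𝕂 := ℂ)]
  refine HasSum.tsum_eq ?_
  refine HasSum.even_add_odd ?_ ?_
  · have h := ((Complex.hasSum_cos (t:ℂ)).smul_const (1 : Matrix (Fin n) (Fin n) ℂ))
    rw [← Complex.ofReal_cos] at h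
    convert h using 2 with k
    · rfl
    rw [pow_mul, hsq, smul_pow, one_pow, smul_smul]
    congr 1
    rw [neg_pow, ← pow_mul]
    ring
  · have h := (((Complex.hasSum_sin (t:ℂ)).mul_right (-Complex.I)).smul_const P)
    rw [← Complex.ofReal_sin] at h
    convert h using 2 with k
    · rfl
    rw [pow_succ, pow_mul, hsq]
    simp only [smul_pow, one_pow, smul_mul_assoc, mul_smul_comm, one_mul, smul_smul]
    refine congrArg (fun z : ℂ => z • P) ?_
    rw [neg_pow, ← pow_mul, pow_succ]
    ring

/-- Parameter-shift rule: for `U θ = exp(-i θ P / 2)` with `P` Hermitian and unitary,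
`L θ = ⟨ψ| W† U(θ)† V† O V U(θ) W |ψ⟩` satisfies
`dL/dθ = (L(θ + π/2) − L(θ − π/2)) / 2`. -/
theorem parameter_shift_rule
    {n : ℕ} (P V W O : Matrix (Fin n) (Fin n) ℂ)
    (hPherm : P.IsHermitian) (hPunit : P * P = 1)
    (hV : V ∈ Matrix.unitaryGroup (Fin n) ℂ)
    (hW : W ∈ Matrix.unitaryGroup (Fin n) ℂ)
    (hO : O.IsHermitian)
    (ψ : Fin n → ℂ) (hψ : ∑ i, Complex.normSq (ψ i) = 1)
    (U : ℝ → Matrix (Fin n) (Fin n) ℂ)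
    (hU : ∀ θ : ℝ, U θ = NormedSpace.exp ((-(θ : ℂ) * Complex.I / 2) • P))
    (L : ℝ → ℝ)
    (hL : ∀ θ : ℝ,
      (L θ : ℂ) = star ψ ⬝ᵥ (Wᴴ * (U θ)ᴴ * Vᴴ * O * V * U θ * W).mulVec ψ) :
    ∀ θ : ℝ, HasDerivAt L ((L (θ + Real.pi / 2) - L (θ - Real.pi / 2)) / 2) θ := by
  classical
  set A : Matrix (Fin n) (Fin n) ℂ := Vᴴ * O * V with hA
  -- explicit form of U
  have hUc : ∀ θ : ℝ, U θ = ((Real.cos (θ/2) : ℝ) : ℂ) • (1 : Matrix (Fin n) (Fin n) ℂ)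
      + (((Real.sin (θ/2) : ℝ) : ℂ) * -Complex.I) • P := by
    intro θ
    rw [hU θ, show ((-(θ:ℂ) * Complex.I / 2) • P) = ((-((θ/2 : ℝ) : ℂ)) * Complex.I) • P by
      push_cast; ring_nf]
    exact exp_herm_unitary P hPunit (θ/2)
  have hUH : ∀ θ : ℝ, (U θ)ᴴ = ((Real.cos (θ/2) : ℝ) : ℂ) • (1 : Matrix (Fin n) (Fin n) ℂ)
      + (((Real.sin (θ/2) : ℝ) : ℂ) * Complex.I) • P := by
    intro θ
    rw [hUc θ, Matrix.conjTranspose_add, Matrix.conjTranspose_smul, Matrix.conjTranspose_smul,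
      Matrix.conjTranspose_one, hPherm.eq]
    congr 1
    · congr 1
      exact Complex.conj_ofReal _
    · congr 1
      simp only [star_mul', star_neg, Complex.star_def, Complex.conj_I, Complex.conj_ofReal]
      ring
  -- constants
  set x : ℂ := star ψ ⬝ᵥ (Wᴴ * A * W).mulVec ψ with hx
  set y : ℂ := star ψ ⬝ᵥ (Wᴴ * (P * A) * W).mulVec ψ with hy
  set z : ℂ := star ψ ⬝ᵥ (Wᴴ * (A * P) * W).mulVec ψ with hz
  set u : ℂ := star ψ ⬝ᵥ (Wᴴ * (P * A * P) * W).mulVec ψ with hu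
  set K : ℂ := Complex.I * (y - z) with hK
  have key : ∀ θ : ℝ, (L θ : ℂ)
      = ((Real.cos (θ/2) ^ 2 : ℝ) : ℂ) * x
        + ((Real.cos (θ/2) * Real.sin (θ/2) : ℝ) : ℂ) * K
        + ((Real.sin (θ/2) ^ 2 : ℝ) : ℂ) * u := by
    intro θ
    rw [hL θ, hUH θ, hUc θ]
    simp only [hK, hx, hy, hz, hu, hA]
    simp only [Matrix.add_mul, Matrix.mul_add, Matrix.smul_mul, Matrix.mul_smul,
      Matrix.one_mul, Matrix.mul_one, smul_smul, Matrix.add_mulVec, Matrix.smul_mulVec,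
      dotProduct_add, dotProduct_smul, Matrix.mul_assoc, smul_eq_mul]
    push_cast
    ring_nf
    simp only [Complex.I_sq]
    ring_nf
  have hre : ∀ θ : ℝ, L θ = Real.cos (θ/2)^2 * x.re
      + (Real.cos (θ/2) * Real.sin (θ/2)) * K.re + Real.sin (θ/2)^2 * u.re := by
    intro θ
    have h := congrArg Complex.re (key θ)
    simpa only [Complex.ofReal_re, Complex.add_re, Complex.re_ofReal_mul] using h
  have hform : ∀ t : ℝ, L t = (x.re + u.re)/2 + (x.re - u.re)/2 * Real.cos t
      + K.re/2 * Real.sin t := by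
    intro t
    have hc : Real.cos (t/2)^2 = (1 + Real.cos t)/2 := by
      have h := Real.cos_sq (t/2)
      rw [show 2*(t/2) = t by ring] at h
      linarith
    have hs : Real.sin (t/2)^2 = (1 - Real.cos t)/2 := by
      have h := Real.sin_sq_add_cos_sq (t/2)
      linarith
    have hcs : Real.cos (t/2) * Real.sin (t/2) = Real.sin t / 2 := by
      have h := Real.sin_two_mul (t/2)
      rw [show 2*(t/2) = t by ring] at h
      linarith
    rw [hre t, hc, hs, hcs]
    ring
  have hLeq : L = fun t : ℝ => (x.re + u.re)/2 + (x.re - u.re)/2 * Real.cos t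
      + K.re/2 * Real.sin t := funext hform
  intro θ
  rw [hLeq]
  have hd : HasDerivAt (fun t : ℝ => (x.re + u.re)/2 + (x.re - u.re)/2 * Real.cos t
      + K.re/2 * Real.sin t)
      (0 + (x.re - u.re)/2 * -Real.sin θ + K.re/2 * Real.cos θ) θ :=
    ((hasDerivAt_const θ _).add ((Real.hasDerivAt_cos θ).const_mul _)).add
      ((Real.hasDerivAt_sin θ).const_mul _)
  convert hd using 1
  simp only [Real.cos_add, Real.sin_add, Real.cos_sub, Real.sin_sub,
    Real.cos_pi_div_two, Real.sin_pi_div_two]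
  ring
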